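/- Let R be a Noetherian ring and S an R-subalgebra of a polynomial ring R[t₁,...,tₙ]. Then contraction gives a bijection between the minimal primes of S and the minimal primes of R; similarly every associated prime of S contracts to an associated prime of R. -/

import Mathlib

open Ideal

lemma aux_mem_minimalPrimes_of_forall {R : Type*} [CommRing R] {p : Ideal R} (hp : p.IsPrime)
    (H : ∀ r ∈ p, ∃ c ∉ p, ∃ k : ℕ, c * r ^ k = 0) : p ∈ minimalPrimes R := by
  refine ⟨⟨hp, bot_le⟩, ?_⟩
  rintro q ⟨hq, -⟩ hle r hr
  obtain ⟨c, hc, k, hck⟩ := H r hr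
  have h0 : c * r ^ k ∈ q := hck ▸ q.zero_mem
  rcases hq.mem_or_mem h0 with h | h
  · exact absurd (hle h) hc
  · exact hq.mem_of_pow_mem _ h

lemma aux_exists_of_mem_minimalPrimes {R : Type*} [CommRing R] {P : Ideal R}
    (hP : P ∈ minimalPrimes R) {x : R} (hx : x ∈ P) :
    ∃ s ∉ P, ∃ k : ℕ, s * x ^ k = 0 := by
  haveI hprime : P.IsPrime := hP.1.1
  have hnil : IsNilpotent (algebraMap R (Localization P.primeCompl) x) := by
    have h1 := IsLocalization.AtPrime.radical_map_of_mem_minimalPrimes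
      (Localization P.primeCompl) P ⊥ hP
    have h2 : algebraMap R (Localization P.primeCompl) x ∈
        (Ideal.map (algebraMap R (Localization P.primeCompl)) (⊥ : Ideal R)).radical :=
      h1 ▸ Ideal.mem_map_of_mem _ hx
    obtain ⟨k, hk⟩ := h2
    rw [Ideal.map_bot, Ideal.mem_bot] at hk
    exact ⟨k, hk⟩
  obtain ⟨k, hk⟩ := hnil
  rw [← map_pow] at hk
  obtain ⟨⟨s, hs⟩, hsk⟩ := (IsLocalization.map_eq_zero_iff P.primeCompl _ _).mp hk
  exact ⟨s, hs, k, hsk⟩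

lemma aux_isPrime_map_C {R : Type*} [CommRing R] {σ : Type*} {q : Ideal R} (hq : q.IsPrime) :
    (q.map (MvPolynomial.C : R →+* MvPolynomial σ R)).IsPrime := by
  have h : q.map (MvPolynomial.C : R →+* MvPolynomial σ R)
      = RingHom.ker (MvPolynomial.map (Ideal.Quotient.mk q) :
          MvPolynomial σ R →+* MvPolynomial σ (R ⧸ q)) := by
    rw [MvPolynomial.ker_map, Ideal.mk_ker]
  rw [h]
  exact RingHom.ker_isPrime _

lemma aux_minimalPrimes_mvPolynomial {R : Type*} [CommRing R] {σ : Type*}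
    {Q : Ideal (MvPolynomial σ R)} (hQ : Q ∈ minimalPrimes (MvPolynomial σ R)) :
    Q.comap (MvPolynomial.C : R →+* MvPolynomial σ R) ∈ minimalPrimes R ∧
      Q = (Q.comap (MvPolynomial.C : R →+* MvPolynomial σ R)).map MvPolynomial.C := by
  haveI hQp : Q.IsPrime := hQ.1.1
  set q := Q.comap (MvPolynomial.C : R →+* MvPolynomial σ R) with hqdef
  haveI hqp : q.IsPrime := Ideal.IsPrime.comap _
  constructor
  · refine aux_mem_minimalPrimes_of_forall hqp ?_
    intro r hr
    obtain ⟨g, hg, k, hgk⟩ := aux_exists_of_mem_minimalPrimes hQ (show MvPolynomial.C r ∈ Q from hr)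
    have hcoeff : ∃ m, MvPolynomial.coeff m g ∉ q := by
      by_contra hall
      push_neg at hall
      exact hg (Ideal.map_comap_le (MvPolynomial.mem_map_C_iff.mpr hall))
    obtain ⟨m, hm⟩ := hcoeff
    refine ⟨MvPolynomial.coeff m g, hm, k, ?_⟩
    have := congrArg (MvPolynomial.coeff m) hgk
    rwa [← map_pow, mul_comm g, MvPolynomial.coeff_C_mul, MvPolynomial.coeff_zero, mul_comm] at this
  · refine le_antisymm ?_ Ideal.map_comap_le
    exact hQ.2 ⟨aux_isPrime_map_C hqp, bot_le⟩ Ideal.map_comap_le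

set_option maxHeartbeats 1000000 in
set_option synthInstance.maxHeartbeats 400000 in
/-- For an `R`-subalgebra `S` of a polynomial ring over a Noetherian ring `R`, contraction is a
bijection between minimal primes of `S` and of `R`, and every associated prime of `S`
contracts to an associated prime of `R`. -/
theorem minimalPrimes_bijOn_of_subalgebra_polynomial {R : Type*} [CommRing R]
    [IsNoetherianRing R] (n : ℕ) (S : Subalgebra R (MvPolynomial (Fin n) R)) :
    Set.BijOn (fun P : Ideal ↥S => P.comap (algebraMap R ↥S))
        (minimalPrimes ↥S) (minimalPrimes R) ∧
      ∀ P ∈ associatedPrimes ↥S ↥S, P.comap (algebraMap R ↥S) ∈ associatedPrimes R R := by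
  set T := MvPolynomial (Fin n) R with hT
  have hinjST : Function.Injective (algebraMap ↥S T) := Subtype.val_injective
  have hinjRT : Function.Injective (algebraMap R T) := by
    rw [MvPolynomial.algebraMap_eq]
    exact MvPolynomial.C_injective _ _
  have htower : (algebraMap ↥S T).comp (algebraMap R ↥S) = algebraMap R T :=
    (IsScalarTower.algebraMap_eq R ↥S T).symm
  have hinjRS : Function.Injective (algebraMap R ↥S) := by
    intro a b h
    apply hinjRT
    rw [← htower, RingHom.comp_apply, RingHom.comp_apply, h]
  have hcomap : ∀ Q : Ideal T,
      (Q.comap (algebraMap ↥S T)).comap (algebraMap R ↥S) = Q.comap (algebraMap R T) := by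
    intro Q
    rw [Ideal.comap_comap, htower]
  -- every minimal prime of S is the contraction of a minimal prime of T
  have key : ∀ P ∈ minimalPrimes ↥S, ∃ Q ∈ minimalPrimes T, Q.comap (algebraMap ↥S T) = P := by
    intro P hP
    have h : P ∈ ((⊥ : Ideal T).comap (algebraMap ↥S T)).minimalPrimes := by
      rwa [← RingHom.ker_eq_comap_bot, (RingHom.injective_iff_ker_eq_bot _).mp hinjST]
    exact Ideal.exists_minimalPrimes_comap_eq _ P h
  have hC : (MvPolynomial.C : R →+* T) = algebraMap R T := (MvPolynomial.algebraMap_eq _ _).symm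
  have mapsTo : Set.MapsTo (fun P : Ideal ↥S => P.comap (algebraMap R ↥S))
      (minimalPrimes ↥S) (minimalPrimes R) := by
    intro P hP
    obtain ⟨Q, hQ, rfl⟩ := key P hP
    show (Q.comap (algebraMap ↥S T)).comap (algebraMap R ↥S) ∈ minimalPrimes R
    rw [hcomap, ← hC]
    exact (aux_minimalPrimes_mvPolynomial hQ).1
  refine ⟨⟨mapsTo, ?_, ?_⟩, ?_⟩
  · -- InjOn
    intro P₁ h₁ P₂ h₂ heq
    obtain ⟨Q₁, hQ₁, hc₁⟩ := key P₁ h₁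
    obtain ⟨Q₂, hQ₂, hc₂⟩ := key P₂ h₂
    have e : Q₁.comap (MvPolynomial.C : R →+* T) = Q₂.comap (MvPolynomial.C : R →+* T) := by
      rw [hC, ← hcomap, ← hcomap, hc₁, hc₂]
      exact heq
    have : Q₁ = Q₂ := by
      rw [(aux_minimalPrimes_mvPolynomial hQ₁).2, (aux_minimalPrimes_mvPolynomial hQ₂).2, e]
    rw [← hc₁, ← hc₂, this]
  · -- SurjOn
    intro p hp
    have h : p ∈ ((⊥ : Ideal ↥S).comap (algebraMap R ↥S)).minimalPrimes := by
      rwa [← RingHom.ker_eq_comap_bot, (RingHom.injective_iff_ker_eq_bot _).mp hinjRS]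
    obtain ⟨P, hP, hPc⟩ := Ideal.exists_minimalPrimes_comap_eq _ p h
    exact ⟨P, hP, hPc⟩
  · -- associated primes
    rintro P ⟨hPprime, x, rfl⟩
    set p := ((Submodule.span ↥S {x}).annihilator).comap (algebraMap R ↥S) with hpdef
    have hmem : ∀ r : R, r ∈ p ↔ ∀ m, r * MvPolynomial.coeff m (x : T) = 0 := by
      intro r
      have h1 : r ∈ p ↔ (algebraMap R ↥S r) * x = 0 := by
        rw [hpdef, Ideal.mem_comap, Submodule.mem_annihilator_span_singleton, smul_eq_mul]
      rw [h1]
      constructor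
      · intro h m
        have : (algebraMap R T r) * (x : T) = 0 := by
          rw [← htower, RingHom.comp_apply]
          have := congrArg (Subtype.val : ↥S → T) h
          have e : (algebraMap ↥S T) ((algebraMap R ↥S) r) = MvPolynomial.C r := by
            rw [← RingHom.comp_apply, htower, ← hC]
          rw [e]
          simpa using this
        have := congrArg (MvPolynomial.coeff m) this
        rwa [← hC, MvPolynomial.coeff_C_mul, MvPolynomial.coeff_zero] at this
      · intro h
        apply hinjST
        rw [_root_.map_mul, _root_.map_zero]
        have hx : ((algebraMap ↥S T) (algebraMap R ↥S r)) = MvPolynomial.C r := by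
          rw [← RingHom.comp_apply, htower, ← hC]
        rw [hx]
        apply MvPolynomial.ext
        intro m
        rw [MvPolynomial.coeff_C_mul, MvPolynomial.coeff_zero]
        exact h m
    have hinf : p = (x : T).support.inf
        (fun m => (Submodule.span R {MvPolynomial.coeff m (x : T)}).annihilator) := by
      ext r
      rw [hmem, Submodule.mem_finsetInf]
      constructor
      · intro h m _
        rw [Submodule.mem_annihilator_span_singleton, smul_eq_mul]
        exact h m
      · intro h m
        by_cases hm : m ∈ (x : T).support
        · have := h m hm
          rwa [Submodule.mem_annihilator_span_singleton, smul_eq_mul] at this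
        · rw [MvPolynomial.notMem_support_iff.mp hm, mul_zero]
    have hcolS : (⊥ : Submodule ↥S ↥S).colon {x} = (Submodule.span ↥S {x}).annihilator := by
      ext r
      rw [Submodule.mem_colon_singleton, Submodule.mem_bot,
        Submodule.mem_annihilator_span_singleton]
    have hcolR : ∀ c : R, (⊥ : Submodule R R).colon {c} = (Submodule.span R {c}).annihilator := by
      intro c
      ext r
      rw [Submodule.mem_colon_singleton, Submodule.mem_bot,
        Submodule.mem_annihilator_span_singleton]
    have hrad : ((⊥ : Submodule ↥S ↥S).colon {x}).radical.comap (algebraMap R ↥S) =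
        (x : T).support.inf
          (fun m => ((⊥ : Submodule R R).colon {MvPolynomial.coeff m (x : T)}).radical) := by
      rw [hcolS, Ideal.comap_radical, ← hpdef, hinf, ← Ideal.radicalInfTopHom_apply,
        map_finset_inf]
      simp only [Function.comp_def, Ideal.radicalInfTopHom_apply, hcolR]
    haveI hpprime : (((⊥ : Submodule ↥S ↥S).colon {x}).radical.comap (algebraMap R ↥S)).IsPrime :=
      Ideal.IsPrime.comap _
    rw [hrad] at hpprime ⊢
    obtain ⟨m, hms, hle⟩ := (Ideal.IsPrime.inf_le' hpprime).mp le_rfl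
    exact ⟨hpprime, MvPolynomial.coeff m (x : T), le_antisymm (Finset.inf_le hms) hle⟩
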